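/- Improve-or-localize: let f : E → ℝ be C¹ on a real inner product space, fix j ≥ 1, η = 1/ℓ with ℓ > 0, and a sequence s₀, s₁, …, s_j with s_{i+1} = s_i − η_i ∇f(s_i) for step sizes 0 ≤ η_i ≤ η. Assume ∇f is ℓ-Lipschitz along each segment [s_i, s_{i+1}]. Then ‖s_j − s₀‖ ≤ sqrt(2 η j (f(s₀) − f(s_j))). -/

import Mathlib

lemma my_descent {E : Type*} [NormedAddCommGroup E] [InnerProductSpace ℝ E]
    [CompleteSpace E] (f : E → ℝ) (hf : ContDiff ℝ 1 f) (ℓ : ℝ)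
    (x d : E)
    (hlip : ∀ u ∈ segment ℝ x (x + d), ∀ v ∈ segment ℝ x (x + d),
      ‖gradient f u - gradient f v‖ ≤ ℓ * ‖u - v‖) :
    f (x + d) ≤ f x + inner ℝ (gradient f x) d + ℓ / 2 * ‖d‖ ^ 2 := by
  set φ : ℝ → ℝ := fun t => f (x + t • d) - t * inner ℝ (gradient f x) d - ℓ / 2 * t ^ 2 * ‖d‖ ^ 2 with hφ
  have hdiff : ∀ t : ℝ, HasDerivAt (fun t : ℝ => f (x + t • d))
      (inner ℝ (gradient f (x + t • d)) d : ℝ) t := by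
    intro t
    have h1 : HasDerivAt (fun t : ℝ => x + t • d) d t := by
      simpa using ((hasDerivAt_id t).smul_const d).const_add x
    have h2 := ((hf.differentiable one_ne_zero) (x + t • d)).hasGradientAt
    rw [hasGradientAt_iff_hasFDerivAt] at h2
    exact h2.comp_hasDerivAt t h1
  have hφd : ∀ t : ℝ, HasDerivAt φ
      ((inner ℝ (gradient f (x + t • d)) d : ℝ) - inner ℝ (gradient f x) d - ℓ * t * ‖d‖ ^ 2) t := by
    intro t
    have := ((hdiff t).sub ((hasDerivAt_id t).mul_const (inner ℝ (gradient f x) d : ℝ))).sub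
      (((hasDerivAt_pow 2 t).const_mul (ℓ / 2)).mul_const (‖d‖ ^ 2))
    convert this using 1
    · rfl
    · rfl
    · rfl
    · ring
  have hmem : ∀ t ∈ Set.Icc (0:ℝ) 1, x + t • d ∈ segment ℝ x (x + d) := by
    intro t ht
    refine ⟨1 - t, t, by linarith [ht.1, ht.2], ht.1, by ring, ?_⟩
    simp [smul_add, smul_smul]
    module
  have hφdiff : Differentiable ℝ φ := fun t => (hφd t).differentiableAt
  have hanti : AntitoneOn φ (Set.Icc 0 1) := by
    refine antitoneOn_of_deriv_nonpos (convex_Icc 0 1) hφdiff.continuous.continuousOn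
      (hφdiff.differentiableOn) ?_
    intro t ht
    rw [interior_Icc] at ht
    rw [(hφd t).deriv]
    have h1 : (inner ℝ (gradient f (x + t • d)) d : ℝ) - inner ℝ (gradient f x) d
        = inner ℝ (gradient f (x + t • d) - gradient f x) d := by
      rw [inner_sub_left]
    rw [h1]
    have h2 : (inner ℝ (gradient f (x + t • d) - gradient f x) d : ℝ)
        ≤ ‖gradient f (x + t • d) - gradient f x‖ * ‖d‖ := real_inner_le_norm _ _
    have h3 : ‖gradient f (x + t • d) - gradient f x‖ ≤ ℓ * ‖x + t • d - x‖ := by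
      apply hlip _ (hmem t ⟨le_of_lt ht.1, le_of_lt ht.2⟩) _
      exact left_mem_segment ℝ x (x + d)
    have h4 : ‖x + t • d - x‖ = t * ‖d‖ := by
      simp [norm_smul, abs_of_pos ht.1]
    have h5 := mul_le_mul_of_nonneg_right h3 (norm_nonneg d)
    rw [h4] at h5
    nlinarith [norm_nonneg d, ht.1]
  have := hanti (Set.left_mem_Icc.2 zero_le_one) (Set.right_mem_Icc.2 zero_le_one) zero_le_one
  simp only [hφ] at this
  simp at this
  have hh : (fderiv ℝ f x) d = inner ℝ (gradient f x) d := by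
    rw [gradient, InnerProductSpace.toDual_symm_apply]
  linarith [this]

theorem stmt_2 {E : Type*} [NormedAddCommGroup E] [InnerProductSpace ℝ E]
    [CompleteSpace E] (f : E → ℝ) (hf : ContDiff ℝ 1 f) (ℓ η : ℝ)
    (hℓ : 0 < ℓ) (hη : η = 1 / ℓ) (j : ℕ) (hj : 1 ≤ j)
    (s : ℕ → E) (ηs : ℕ → ℝ)
    (hηs : ∀ i < j, ηs i ∈ Set.Icc 0 η)
    (hrec : ∀ i < j, s (i + 1) = s i - ηs i • gradient f (s i))
    (hlip : ∀ i < j, ∀ u ∈ segment ℝ (s i) (s (i + 1)), ∀ v ∈ segment ℝ (s i) (s (i + 1)),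
      ‖gradient f u - gradient f v‖ ≤ ℓ * ‖u - v‖) :
    ‖s j - s 0‖ ≤ Real.sqrt (2 * η * j * (f (s 0) - f (s j))) := by
  have hηpos : 0 < η := by rw [hη]; positivity
  have hηℓ : η * ℓ = 1 := by rw [hη]; field_simp
  -- per-step estimate
  have hstep : ∀ i < j, ‖s (i + 1) - s i‖ ^ 2 ≤ 2 * η * (f (s i) - f (s (i + 1))) := by
    intro i hi
    set g := gradient f (s i) with hg
    set a := ηs i with ha
    obtain ⟨ha0, haη⟩ := hηs i hi
    have hsd : s (i + 1) = s i + (-(a • g)) := by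
      rw [hrec i hi]; abel
    have hdesc := my_descent f hf ℓ (s i) (-(a • g)) (by rw [← hsd]; exact hlip i hi)
    rw [← hsd] at hdesc
    have hin : (inner ℝ g (-(a • g)) : ℝ) = -(a * ‖g‖ ^ 2) := by
      rw [inner_neg_right, real_inner_smul_right, real_inner_self_eq_norm_sq]
    have hnd : ‖-(a • g)‖ ^ 2 = a ^ 2 * ‖g‖ ^ 2 := by
      rw [norm_neg, norm_smul, mul_pow, Real.norm_eq_abs, sq_abs]
    rw [hin, hnd] at hdesc
    have hdiff : s (i + 1) - s i = -(a • g) := by rw [hsd]; abel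
    rw [hdiff, hnd]
    -- f(s_{i+1}) ≤ f(s_i) - a‖g‖² + ℓ/2 a²‖g‖², and a ≤ η, ηℓ = 1
    nlinarith [norm_nonneg g, sq_nonneg (‖g‖), mul_le_mul_of_nonneg_right haη (mul_nonneg ha0 (sq_nonneg ‖g‖)),
      mul_nonneg (mul_nonneg ha0 ha0) (sq_nonneg ‖g‖)]
  -- telescoping and Cauchy-Schwarz
  have htel : s j - s 0 = ∑ i ∈ Finset.range j, (s (i + 1) - s i) := (Finset.sum_range_sub s j).symm
  have h1 : ‖s j - s 0‖ ≤ ∑ i ∈ Finset.range j, ‖s (i + 1) - s i‖ := by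
    rw [htel]; exact norm_sum_le _ _
  have h2 : (∑ i ∈ Finset.range j, ‖s (i + 1) - s i‖) ^ 2
      ≤ (j : ℝ) * ∑ i ∈ Finset.range j, ‖s (i + 1) - s i‖ ^ 2 := by
    simpa using sq_sum_le_card_mul_sum_sq (s := Finset.range j) (f := fun i => ‖s (i + 1) - s i‖)
  have h3 : (∑ i ∈ Finset.range j, ‖s (i + 1) - s i‖ ^ 2)
      ≤ 2 * η * (f (s 0) - f (s j)) := by
    calc (∑ i ∈ Finset.range j, ‖s (i + 1) - s i‖ ^ 2)
        ≤ ∑ i ∈ Finset.range j, 2 * η * (f (s i) - f (s (i + 1))) := by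
          apply Finset.sum_le_sum
          intro i hi
          exact hstep i (Finset.mem_range.mp hi)
      _ = 2 * η * (f (s 0) - f (s j)) := by
          rw [← Finset.mul_sum, Finset.sum_range_sub' (fun i => f (s i))]
  have hsum_nonneg : (0:ℝ) ≤ ∑ i ∈ Finset.range j, ‖s (i + 1) - s i‖ := by positivity
  have hsq : ‖s j - s 0‖ ^ 2 ≤ 2 * η * j * (f (s 0) - f (s j)) := by
    have := pow_le_pow_left₀ (norm_nonneg _) h1 2
    have hjj : (j : ℝ) * (2 * η * (f (s 0) - f (s j))) = 2 * η * j * (f (s 0) - f (s j)) := by ring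
    calc ‖s j - s 0‖ ^ 2 ≤ (∑ i ∈ Finset.range j, ‖s (i + 1) - s i‖) ^ 2 := this
      _ ≤ (j : ℝ) * ∑ i ∈ Finset.range j, ‖s (i + 1) - s i‖ ^ 2 := h2
      _ ≤ 2 * η * j * (f (s 0) - f (s j)) := by
          rw [← hjj]
          exact mul_le_mul_of_nonneg_left h3 (Nat.cast_nonneg j)
  rw [Real.le_sqrt (norm_nonneg _) (le_trans (sq_nonneg _) hsq)]
  exact hsq
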